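/- Let p : ℝ^d → ℝ be a probability density, α > 0, γ > 0, x ∈ ℝ^d with p_{α,γ}(x) > 0, and let a, g ∈ ℝ be arbitrary (playing the roles of the time-derivatives α̇ and γ̇ of the interpolation coefficients). Assume that y ↦ (1 + ‖y‖)·p(y)·φ_{α,γ}(x', y) is integrable for all x' in a neighborhood of x and that differentiation under the integral sign in x is justified by an integrable dominating function. Then ∫_{ℝ^d} (a·y + (g/γ)·(x − α·y)) · p(y | x) dy = (a/α)·x + γ·((a·γ)/α − g)·∇_x log p_{α,γ}(x); that is, the flow-matching velocity field (the posterior expectation of α̇·x₀ + γ̇·ε given x_t = x, where ε = (x − α·x₀)/γ) equals (α̇/α)·x + γ·(α̇·γ/α − γ̇)·s(x), with s the score of the noised marginal. -/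

import Mathlib

open MeasureTheory Filter

/-- The (unnormalized) Gaussian transition kernel
`φ_{α,γ}(x, y) = exp(−‖x − α·y‖²/(2γ²))`. -/
noncomputable def gaussKernel (d : ℕ) (α γ : ℝ)
    (x y : EuclideanSpace ℝ (Fin d)) : ℝ :=
  Real.exp (-‖x - α • y‖ ^ 2 / (2 * γ ^ 2))

lemma kernel_hasFDerivAt (d : ℕ) (α γ : ℝ) (hγ : γ ≠ 0) (c : ℝ)
    (y x' : EuclideanSpace ℝ (Fin d)) :
    HasFDerivAt (fun x'' => c * gaussKernel d α γ x'' y)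
      ((InnerProductSpace.toDual ℝ _)
        ((c * gaussKernel d α γ x' y * (-(γ ^ 2)⁻¹)) • (x' - α • y))) x' := by
  have h1 : HasFDerivAt (fun x'' : EuclideanSpace ℝ (Fin d) => x'' - α • y)
      (ContinuousLinearMap.id ℝ _) x' := (hasFDerivAt_id x').sub_const _
  have h2 := (h1.norm_sq.neg.mul_const (2 * γ ^ 2)⁻¹)
  have h3 := (Real.hasDerivAt_exp (-‖x' - α • y‖ ^ 2 * (2 * γ ^ 2)⁻¹)).comp_hasFDerivAt x' h2
  have h4 := h3.const_mul c
  have heq : (fun x'' => c * gaussKernel d α γ x'' y)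
      = fun x'' => c * Real.exp (-‖x'' - α • y‖ ^ 2 * (2 * γ ^ 2)⁻¹) := by
    funext x''; simp [gaussKernel, div_eq_mul_inv]
  rw [heq]
  refine h4.congr_fderiv ?_
  ext v
  simp [gaussKernel, InnerProductSpace.toDual_apply_apply, real_inner_smul_left, div_eq_mul_inv]
  field_simp

lemma kernel_hasGradientAt (d : ℕ) (α γ : ℝ) (hγ : γ ≠ 0) (c : ℝ)
    (y x' : EuclideanSpace ℝ (Fin d)) :
    HasGradientAt (fun x'' => c * gaussKernel d α γ x'' y)
      ((c * gaussKernel d α γ x' y * (-(γ ^ 2)⁻¹)) • (x' - α • y)) x' :=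
  hasGradientAt_iff_hasFDerivAt.mpr (kernel_hasFDerivAt d α γ hγ c y x')

lemma gaussKernel_nonneg (d : ℕ) (α γ : ℝ) (x y : EuclideanSpace ℝ (Fin d)) :
    0 ≤ gaussKernel d α γ x y := Real.exp_nonneg _

lemma gaussKernel_continuous (d : ℕ) (α γ : ℝ) (x : EuclideanSpace ℝ (Fin d)) :
    Continuous (fun y => gaussKernel d α γ x y) := by
  unfold gaussKernel; fun_prop

/-- **Flow-matching velocity field in terms of the score.**
Let `p : ℝ^d → ℝ` be a probability density, `α > 0`, `γ > 0`, `x ∈ ℝ^d` with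
`p_{α,γ}(x) > 0`, and let `a, g ∈ ℝ` play the roles of `α̇` and `γ̇`.  Assume
`y ↦ (1 + ‖y‖) p(y) φ_{α,γ}(x', y)` is integrable for `x'` near `x` and that
differentiation under the integral sign in `x` is justified by an integrable
dominating function.  Then
`∫ (a·y + (g/γ)(x − α·y)) p(y | x) dy = (a/α)·x + γ((aγ)/α − g)·∇_x log p_{α,γ}(x)`. -/
theorem flow_matching_velocity_eq_score (d : ℕ)
    (p : EuclideanSpace ℝ (Fin d) → ℝ)
    (hp0 : ∀ y, 0 ≤ p y) (hpI : Integrable p) (hpP : ∫ y, p y = 1)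
    (α γ : ℝ) (hα : 0 < α) (hγ : 0 < γ)
    (x : EuclideanSpace ℝ (Fin d)) (a g : ℝ)
    (hpos : 0 < ∫ y, p y * gaussKernel d α γ x y)
    (hInt : ∀ᶠ x' in nhds x,
      Integrable (fun y => (1 + ‖y‖) * (p y * gaussKernel d α γ x' y)))
    (hDom : ∃ (ε : ℝ) (bound : EuclideanSpace ℝ (Fin d) → ℝ), 0 < ε ∧
      Integrable bound ∧
      ∀ y, ∀ x' ∈ Metric.ball x ε,
        ‖gradient (fun x'' => p y * gaussKernel d α γ x'' y) x'‖ ≤ bound y) :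
    (∫ y, ((p y * gaussKernel d α γ x y) / ∫ z, p z * gaussKernel d α γ x z) •
        (a • y + (g / γ) • (x - α • y)))
      = (a / α) • x + (γ * ((a * γ) / α - g)) •
          gradient (fun x' => Real.log (∫ y, p y * gaussKernel d α γ x' y)) x := by
  have hγ' : γ ≠ 0 := ne_of_gt hγ
  have hα' : α ≠ 0 := ne_of_gt hα
  have hγ2 : (0:ℝ) < (γ ^ 2)⁻¹ := by positivity
  set F : ℝ := ∫ z, p z * gaussKernel d α γ x z with hFdef
  have hF0 : F ≠ 0 := ne_of_gt hpos
  set w : EuclideanSpace ℝ (Fin d) → EuclideanSpace ℝ (Fin d) := fun y =>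
    (p y * gaussKernel d α γ x y * (-(γ ^ 2)⁻¹)) • (x - α • y) with hwdef
  -- measurability
  have hmeasK : ∀ x' : EuclideanSpace ℝ (Fin d),
      AEStronglyMeasurable (fun y => p y * gaussKernel d α γ x' y) volume :=
    fun x' => hpI.aestronglyMeasurable.mul (gaussKernel_continuous d α γ x').aestronglyMeasurable
  have hK0 : ∀ (x' y : EuclideanSpace ℝ (Fin d)), 0 ≤ p y * gaussKernel d α γ x' y :=
    fun x' y => mul_nonneg (hp0 y) (gaussKernel_nonneg d α γ x' y)
  have hIntx0 := hInt.self_of_nhds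
  have hIntx : Integrable (fun y => p y * gaussKernel d α γ x y) := by
    refine hIntx0.mono (hmeasK x) (Filter.Eventually.of_forall fun y => ?_)
    rw [Real.norm_eq_abs, Real.norm_eq_abs, abs_of_nonneg (hK0 x y),
      abs_of_nonneg (mul_nonneg (by positivity) (hK0 x y))]
    nlinarith [hK0 x y, norm_nonneg y]
  have hwmeas : AEStronglyMeasurable w volume := by
    refine AEStronglyMeasurable.smul (𝕜 := ℝ) ?_ ?_
    · exact (hmeasK x).mul aestronglyMeasurable_const
    · exact (by fun_prop : Continuous fun y : EuclideanSpace ℝ (Fin d) => x - α • y).aestronglyMeasurable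
  have hub : ∀ y : EuclideanSpace ℝ (Fin d), ‖x - α • y‖ ≤ (‖x‖ + |α|) * (1 + ‖y‖) := by
    intro y
    have := norm_sub_le x (α • y)
    rw [norm_smul, Real.norm_eq_abs] at this
    nlinarith [norm_nonneg x, norm_nonneg y, abs_nonneg α]
  have hIntw : Integrable w := by
    refine (hIntx0.const_mul ((γ ^ 2)⁻¹ * (‖x‖ + |α|))).mono hwmeas
      (Filter.Eventually.of_forall fun y => ?_)
    have h2 : ‖w y‖ = p y * gaussKernel d α γ x y * (γ ^ 2)⁻¹ * ‖x - α • y‖ := by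
      rw [hwdef]
      simp only [norm_smul, Real.norm_eq_abs, abs_mul, abs_of_nonneg (hK0 x y), abs_neg,
        abs_of_nonneg (le_of_lt hγ2)]
    rw [h2, Real.norm_eq_abs, abs_of_nonneg (mul_nonneg (mul_nonneg (le_of_lt hγ2)
      (by positivity)) (mul_nonneg (by positivity) (hK0 x y)))]
    calc p y * gaussKernel d α γ x y * (γ ^ 2)⁻¹ * ‖x - α • y‖
        ≤ p y * gaussKernel d α γ x y * (γ ^ 2)⁻¹ * ((‖x‖ + |α|) * (1 + ‖y‖)) := by
          gcongr
          · exact mul_nonneg (hK0 x y) (le_of_lt hγ2)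
          · exact hub y
      _ = (γ ^ 2)⁻¹ * (‖x‖ + |α|) * ((1 + ‖y‖) * (p y * gaussKernel d α γ x y)) := by ring
  -- differentiation under the integral sign
  obtain ⟨ε, bound, hε, hboundI, hbound⟩ := hDom
  have hgradval : ∀ (y x' : EuclideanSpace ℝ (Fin d)),
      gradient (fun x'' => p y * gaussKernel d α γ x'' y) x'
        = (p y * gaussKernel d α γ x' y * (-(γ ^ 2)⁻¹)) • (x' - α • y) :=
    fun y x' => (kernel_hasGradientAt d α γ hγ' (p y) y x').gradient
  have hF'meas : AEStronglyMeasurable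
      (fun y => (InnerProductSpace.toDual ℝ (EuclideanSpace ℝ (Fin d))) (w y)) volume :=
    (InnerProductSpace.toDual ℝ (EuclideanSpace ℝ (Fin d))).continuous.comp_aestronglyMeasurable
      hwmeas
  have hDeriv : HasFDerivAt (fun x' => ∫ y, p y * gaussKernel d α γ x' y)
      (∫ y, (InnerProductSpace.toDual ℝ (EuclideanSpace ℝ (Fin d)))
        ((p y * gaussKernel d α γ x y * (-(γ ^ 2)⁻¹)) • (x - α • y))) x := by
    refine hasFDerivAt_integral_of_dominated_of_fderiv_le (F' := fun x' y =>
        (InnerProductSpace.toDual ℝ (EuclideanSpace ℝ (Fin d)))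
          ((p y * gaussKernel d α γ x' y * (-(γ ^ 2)⁻¹)) • (x' - α • y)))
      (Metric.ball_mem_nhds x hε) (Filter.Eventually.of_forall fun x' => hmeasK x') hIntx hF'meas
      (Filter.Eventually.of_forall fun y => fun x' hx' => ?_) hboundI
      (Filter.Eventually.of_forall fun y => fun x' hx' =>
        kernel_hasFDerivAt d α γ hγ' (p y) y x')
    rw [LinearIsometryEquiv.norm_map, ← hgradval y x']
    exact hbound y x' hx'
  have hIntEq : (∫ y, (InnerProductSpace.toDual ℝ (EuclideanSpace ℝ (Fin d)))
        ((p y * gaussKernel d α γ x y * (-(γ ^ 2)⁻¹)) • (x - α • y)))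
      = (InnerProductSpace.toDual ℝ (EuclideanSpace ℝ (Fin d))) (∫ y, w y) :=
    (InnerProductSpace.toDual ℝ (EuclideanSpace ℝ (Fin d))).toLinearIsometry.integral_comp_comm w
  rw [hIntEq] at hDeriv
  -- gradient of the log
  have hlog := (Real.hasDerivAt_log hF0).comp_hasFDerivAt x hDeriv
  have hsm : F⁻¹ • (InnerProductSpace.toDual ℝ (EuclideanSpace ℝ (Fin d)))
        (∫ y, w y)
      = (InnerProductSpace.toDual ℝ (EuclideanSpace ℝ (Fin d))) (F⁻¹ • ∫ y, w y) :=
    ((InnerProductSpace.toDual ℝ (EuclideanSpace ℝ (Fin d))).map_smul F⁻¹ _).symm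
  rw [hsm] at hlog
  have hgradlog : gradient (fun x' => Real.log (∫ y, p y * gaussKernel d α γ x' y)) x
      = F⁻¹ • ∫ y, w y := by
    refine (hasGradientAt_iff_hasFDerivAt.mpr ?_).gradient
    exact hlog
  rw [hgradlog]
  -- pointwise rewriting of the integrand
  have hpt : ∀ y : EuclideanSpace ℝ (Fin d),
      ((p y * gaussKernel d α γ x y) / F) • (a • y + (g / γ) • (x - α • y))
        = F⁻¹ • ((a / α) • ((p y * gaussKernel d α γ x y) • x)
            + ((g / γ - a / α) * (-γ ^ 2)) • w y) := by
    intro y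
    have hy : a • y = (a / α) • x - (a / α) • (x - α • y) := by
      rw [smul_sub, sub_sub_cancel, smul_smul, div_mul_cancel₀ a hα']
    rw [hy, hwdef]
    simp only []
    match_scalars <;> field_simp <;> ring
  simp_rw [hpt]
  rw [integral_smul]
  have hA : Integrable (fun y => (a / α) • ((p y * gaussKernel d α γ x y) • x)) :=
    (hIntx.smul_const x).smul (a / α)
  have hB : Integrable (fun y => ((g / γ - a / α) * (-γ ^ 2)) • w y) :=
    hIntw.smul ((g / γ - a / α) * (-γ ^ 2))
  rw [integral_add hA hB, integral_smul, integral_smul, integral_smul_const, ← hFdef]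
  rw [smul_add]
  match_scalars <;> field_simp <;> ring
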